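/- Let n ≥ 1, let G be a nonsingular real n×n matrix, let P ⊆ ℝⁿ be a basic cell of the lattice Gℤⁿ with lattice quantizer Q_P, and let A ⊆ P be measurable with vol(A) > 0. Fix x ∈ ℝⁿ. Let V₁, V₂, … be i.i.d. with law Unif(P), and let H be the least index i such that Q_P(x − V_i) + V_i − x ∈ A. Then H is geometrically distributed with success probability p = vol(A)/vol(P): for every integer k ≥ 1, P(H = k) = (1 − vol(A)/vol(P))^{k−1} · vol(A)/vol(P). In particular the acceptance probability of a single trial is vol(A)/vol(P). -/

import Mathlib

open MeasureTheory ProbabilityTheory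

/-- `Unif A`: the uniform probability measure on a set `A ⊆ ℝⁿ`. -/
noncomputable def Unif {n : ℕ} (A : Set (Fin n → ℝ)) : Measure (Fin n → ℝ) :=
  (volume A)⁻¹ • volume.restrict A

/-- **The number of trials of the RSUQ is geometric with success probability
`vol(A)/vol(P)`.** Let `P` be a basic cell of the lattice `Gℤⁿ` with lattice quantizer
`Q_P`, and let `A ⊆ P` be measurable with positive volume. Fix an input `x`. Let
`V₁, V₂, …` be i.i.d. dithers with law `Unif P` (formalized as: a probability measure
`ν` on `ℕ → ℝⁿ` whose coordinates are independent, each with law `Unif P`; only the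
coordinates with index `≥ 1` are used), and let `H` be the least index `i ≥ 1` with
`Q_P(x − V_i) + V_i − x ∈ A`. Then for every integer `k ≥ 1`,
`ν {H = k} = (1 − vol(A)/vol(P))^(k−1) · vol(A)/vol(P)`. -/
theorem rsuq_trials_geometric {n : ℕ} (hn : 1 ≤ n)
    (G : Matrix (Fin n) (Fin n) ℝ) (hG : IsUnit G.det)
    (P : Set (Fin n → ℝ)) (hPmeas : MeasurableSet P) (hPbdd : Bornology.IsBounded P)
    (hP0 : 0 < volume P) (hPfin : volume P < ⊤)
    (hpart : ∀ x : Fin n → ℝ, ∃! j : Fin n → ℤ,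
      x - G.mulVec (fun i => (j i : ℝ)) ∈ P)
    (QP : (Fin n → ℝ) → (Fin n → ℝ)) (hQmeas : Measurable QP)
    (hQlat : ∀ y : Fin n → ℝ, ∃ j : Fin n → ℤ, QP y = G.mulVec (fun i => (j i : ℝ)))
    (hQcell : ∀ y : Fin n → ℝ, QP y - y ∈ P)
    (A : Set (Fin n → ℝ)) (hAmeas : MeasurableSet A) (hAP : A ⊆ P) (hA0 : 0 < volume A)
    (x : Fin n → ℝ)
    (ν : Measure (ℕ → (Fin n → ℝ))) [IsProbabilityMeasure ν]
    (hindep : iIndepFun (fun i (ω : ℕ → (Fin n → ℝ)) => ω i) ν)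
    (hlaw : ∀ i : ℕ, Measure.map (fun ω : ℕ → (Fin n → ℝ) => ω i) ν = Unif P)
    (k : ℕ) (hk : 1 ≤ k) :
    ν {ω : ℕ → (Fin n → ℝ) |
        sInf {i : ℕ | 1 ≤ i ∧ QP (x - ω i) + ω i - x ∈ A} = k}
      = (1 - volume A / volume P) ^ (k - 1) * (volume A / volume P) := by
  classical
  set L : (Fin n → ℤ) → (Fin n → ℝ) := fun j => G.mulVec (fun i => (j i : ℝ)) with hLdef
  -- uniqueness of the lattice point `ℓ` with `ℓ - z ∈ P`
  have hLneg : ∀ j, L (-j) = -L j := by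
    intro j
    simp only [hLdef]
    rw [show (fun i => (((-j) i : ℤ) : ℝ)) = -(fun i => ((j i : ℤ) : ℝ)) by
      funext i; simp, Matrix.mulVec_neg]
  have huniq : ∀ (z : Fin n → ℝ) (j j' : Fin n → ℤ),
      L j - z ∈ P → L j' - z ∈ P → j = j' := by
    intro z j j' hj hj'
    obtain ⟨j₀, _, hu⟩ := hpart (-z)
    have e : ∀ m : Fin n → ℤ, (-z) - L (-m) = L m - z := by
      intro m; rw [hLneg]; abel
    have h1 : -j = j₀ := hu (-j) (by show -z - L (-j) ∈ P; rw [e]; exact hj)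
    have h2 : -j' = j₀ := hu (-j') (by show -z - L (-j') ∈ P; rw [e]; exact hj')
    have := h1.trans h2.symm
    simpa using congrArg Neg.neg this
  have hQ : ∀ (z : Fin n → ℝ) (j : Fin n → ℤ), L j - z ∈ P → QP z = L j := by
    intro z j hj
    obtain ⟨j₀, hj₀⟩ := hQlat z
    have hz : L j₀ - z ∈ P := by
      simp only [hLdef]
      rw [← hj₀]
      exact hQcell z
    rw [hj₀, huniq z j₀ j hz hj]
  -- the success set for a single dither
  set B : Set (Fin n → ℝ) := {y | QP (x - y) + y - x ∈ A} with hBdef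
  have hBmeas : MeasurableSet B := by
    have : Measurable fun y : Fin n → ℝ => QP (x - y) + y - x :=
      ((hQmeas.comp (measurable_const.sub measurable_id)).add measurable_id).sub
        measurable_const
    exact this hAmeas
  -- translates of `A` and of `P`
  set C : (Fin n → ℤ) → Set (Fin n → ℝ) := fun j => (fun y => y + (L j - x)) ⁻¹' A
    with hCdef
  set D : (Fin n → ℤ) → Set (Fin n → ℝ) := fun j => (fun a => a + x - L j) ⁻¹' P
    with hDdef
  have hBU : B = ⋃ j, C j := by
    ext y
    simp only [hBdef, hCdef, Set.mem_setOf_eq, Set.mem_iUnion, Set.mem_preimage]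
    constructor
    · intro hy
      obtain ⟨j, hj⟩ := hQlat (x - y)
      refine ⟨j, ?_⟩
      have : y + (L j - x) = QP (x - y) + y - x := by rw [hj]; abel
      rw [this]; exact hy
    · rintro ⟨j, hj⟩
      have hP' : L j - (x - y) ∈ P := by
        have : L j - (x - y) = y + (L j - x) := by abel
        rw [this]; exact hAP hj
      have hQx : QP (x - y) = L j := hQ (x - y) j hP'
      have : QP (x - y) + y - x = y + (L j - x) := by rw [hQx]; abel
      rw [this]; exact hj
  have hCdisj : Pairwise (Function.onFun Disjoint C) := by
    intro i j hij
    rw [Function.onFun, Set.disjoint_left]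
    intro y hyi hyj
    refine hij (huniq (x - y) i j ?_ ?_)
    · have : L i - (x - y) = y + (L i - x) := by abel
      rw [this]; exact hAP hyi
    · have : L j - (x - y) = y + (L j - x) := by abel
      rw [this]; exact hAP hyj
  have hCmeas : ∀ j, MeasurableSet (C j) :=
    fun j => (measurable_add_const _) hAmeas
  have hDmeas : ∀ j, MeasurableSet (D j) := by
    intro j
    exact ((measurable_add_const x).sub measurable_const) hPmeas
  -- the key volume computation : vol (P ∩ B) = vol A
  have hPCAD : ∀ j, volume (P ∩ C j) = volume (A ∩ D j) := by
    intro j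
    have hset : P ∩ C j = (fun y => y + (L j - x)) ⁻¹' (A ∩ D j) := by
      ext y
      have key : y + (L j - x) + x - L j = y := by abel
      simp only [hCdef, hDdef, Set.mem_inter_iff, Set.mem_preimage, key]
      tauto
    rw [hset, measure_preimage_add_right]
  have hADdisj : Pairwise (Function.onFun Disjoint (fun j => A ∩ D j)) := by
    intro i j hij
    rw [Function.onFun, Set.disjoint_left]
    rintro a ⟨_, hai⟩ ⟨_, haj⟩
    obtain ⟨j₀, _, hu⟩ := hpart (a + x)
    exact hij ((hu i hai).trans (hu j haj).symm)
  have hADunion : (⋃ j, A ∩ D j) = A := by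
    ext a
    simp only [Set.mem_iUnion, Set.mem_inter_iff]
    constructor
    · rintro ⟨j, ha, _⟩; exact ha
    · intro ha
      obtain ⟨j, hj, _⟩ := hpart (a + x)
      exact ⟨j, ha, hj⟩
  have hPB : volume (P ∩ B) = volume A := by
    calc volume (P ∩ B) = volume (⋃ j, P ∩ C j) := by rw [hBU, Set.inter_iUnion]
      _ = ∑' j, volume (P ∩ C j) :=
        measure_iUnion (fun i j hij =>
          ((hCdisj hij).mono (Set.inter_subset_right) (Set.inter_subset_right)))
          (fun j => hPmeas.inter (hCmeas j))
      _ = ∑' j, volume (A ∩ D j) := by simp only [hPCAD]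
      _ = volume (⋃ j, A ∩ D j) :=
        (measure_iUnion hADdisj (fun j => hAmeas.inter (hDmeas j))).symm
      _ = volume A := by rw [hADunion]
  -- single-trial probabilities
  set p : ENNReal := volume A / volume P with hpdef
  have hsingle : ∀ i : ℕ, ν ((fun ω : ℕ → Fin n → ℝ => ω i) ⁻¹' B) = p := by
    intro i
    rw [← Measure.map_apply (measurable_pi_apply i) hBmeas, hlaw i]
    simp only [Unif, Measure.smul_apply, Measure.restrict_apply hBmeas, smul_eq_mul]
    rw [Set.inter_comm, hPB, hpdef, ENNReal.div_eq_inv_mul]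
  have hcompl : ∀ i : ℕ, ν ((fun ω : ℕ → Fin n → ℝ => ω i) ⁻¹' Bᶜ) = 1 - p := by
    intro i
    rw [Set.preimage_compl,
      measure_compl ((measurable_pi_apply i) hBmeas) (measure_ne_top ν _),
      measure_univ, hsingle]
  -- rewrite the event as a finite intersection of independent events
  have hEvent : {ω : ℕ → (Fin n → ℝ) |
        sInf {i : ℕ | 1 ≤ i ∧ QP (x - ω i) + ω i - x ∈ A} = k}
      = ⋂ i ∈ Finset.Icc 1 k,
          (fun ω : ℕ → Fin n → ℝ => ω i) ⁻¹' (if i = k then B else Bᶜ) := by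
    ext ω
    simp only [Set.mem_setOf_eq, Set.mem_iInter, Finset.mem_Icc, Set.mem_preimage]
    set T : Set ℕ := {i : ℕ | 1 ≤ i ∧ QP (x - ω i) + ω i - x ∈ A} with hTdef
    have hmemB : ∀ i, ω i ∈ B ↔ QP (x - ω i) + ω i - x ∈ A := fun i => Iff.rfl
    constructor
    · intro h i hi
      have hne : T.Nonempty := by
        by_contra h'
        rw [Set.not_nonempty_iff_eq_empty] at h'
        rw [h', Nat.sInf_empty] at h
        omega
      by_cases hik : i = k
      · rw [if_pos hik, hik, hmemB]
        have := Nat.sInf_mem hne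
        rw [h] at this
        exact this.2
      · rw [if_neg hik]
        have hlt : i < sInf T := by rw [h]; omega
        have := Nat.notMem_of_lt_sInf hlt
        simp only [hTdef, Set.mem_setOf_eq, not_and] at this
        exact fun hc => this hi.1 ((hmemB i).mp hc)
    · intro h
      have hkT : k ∈ T := by
        have := h k ⟨hk, le_refl k⟩
        rw [if_pos rfl] at this
        exact ⟨hk, (hmemB k).mp this⟩
      refine le_antisymm (Nat.sInf_le hkT) ?_
      by_contra h'
      push_neg at h'
      have hmem := Nat.sInf_mem ⟨k, hkT⟩
      have h1 : 1 ≤ sInf T := hmem.1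
      have := h (sInf T) ⟨h1, by omega⟩
      rw [if_neg (by omega)] at this
      exact this ((hmemB _).mpr hmem.2)
  rw [hEvent,
    hindep.meas_biInter (fun i _ =>
      ⟨if i = k then B else Bᶜ, by split_ifs; exacts [hBmeas, hBmeas.compl], rfl⟩)]
  have hIns : Finset.Icc 1 k = insert k (Finset.Icc 1 (k - 1)) := by
    ext i; simp only [Finset.mem_Icc, Finset.mem_insert]; omega
  rw [hIns, Finset.prod_insert (by simp only [Finset.mem_Icc]; omega)]
  rw [if_pos rfl, hsingle k]
  rw [Finset.prod_congr rfl (fun i hi => by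
      rw [if_neg (by simp only [Finset.mem_Icc] at hi; omega)]),
    Finset.prod_congr rfl fun i _ => hcompl i,
    Finset.prod_const, Nat.card_Icc,
    show k - 1 + 1 - 1 = k - 1 from by omega]
  exact mul_comm _ _
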